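/- Let k be a field and H a bialgebra over k, with comultiplication Δ(h) = Σ h_{(1)} ⊗ h_{(2)} and counit ε. Let (M, ρ, δ) be a right-right Hopf module over H: ρ : M ⊗ H → M is a unital associative right action (written m·h), δ : M → M ⊗ H is a counital coassociative right coaction (written δ(m) = Σ m_{(0)} ⊗ m_{(1)}), and the Hopf compatibility δ(m·h) = Σ m_{(0)}·h_{(1)} ⊗ m_{(1)}h_{(2)} holds. Let H* ⊗_{σ_bi} H be the algebra whose underlying space is H* ⊗ H with multiplication (l ⊗ h)(l' ⊗ h') = Σ (l * (x ↦ l'(x·h_{(2)}))) ⊗ h_{(1)}h', where (l * l')(x) = Σ l(x_{(2)}) l'(x_{(1)}), and unit ε ⊗ 1. Then the linear map M ⊗ (H* ⊗ H) → M, m ⊗ (l ⊗ h) ↦ Σ l(m_{(1)}) (m_{(0)}·h), is a unital associative right action of H* ⊗_{σ_bi} H on M. -/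

import Mathlib

open TensorProduct

variable (k : Type*) [Field k]

/-- The multiplication of the twisted (braided) tensor product `Q ⊗_ξ P`. -/
noncomputable def twistMul {P Q : Type*} [AddCommGroup P] [Module k P]
    [AddCommGroup Q] [Module k Q]
    (μQ : Q ⊗[k] Q →ₗ[k] Q) (μP : P ⊗[k] P →ₗ[k] P)
    (ξ : P ⊗[k] Q →ₗ[k] Q ⊗[k] P) :
    (Q ⊗[k] P) ⊗[k] (Q ⊗[k] P) →ₗ[k] Q ⊗[k] P :=
  (μQ.rTensor P)
    ∘ₗ (TensorProduct.assoc k Q Q P).symm.toLinearMap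
    ∘ₗ (LinearMap.lTensor Q
          ((μP.lTensor Q)
            ∘ₗ (TensorProduct.assoc k Q P P).toLinearMap
            ∘ₗ (ξ.rTensor P)
            ∘ₗ (TensorProduct.assoc k P Q P).symm.toLinearMap))
    ∘ₗ (TensorProduct.assoc k Q P (Q ⊗[k] P)).toLinearMap

variable (H : Type*) [Ring H] [Bialgebra k H]

/-- The bilinear contraction `H ⊗ H* → H*`, `h ⊗ l ↦ (x ↦ l (x * h))`. -/
noncomputable def rightMulDual : H ⊗[k] Module.Dual k H →ₗ[k] Module.Dual k H :=
  TensorProduct.lift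
    ((LinearMap.llcomp k H H k).flip ∘ₗ (LinearMap.mul k H).flip)

/-- The braiding `σ_bi : H ⊗ H* → H* ⊗ H`,
`h ⊗ l ↦ Σ (x ↦ l (x · h₍₂₎)) ⊗ h₍₁₎` (Sweedler notation). -/
noncomputable def sigmaBi : H ⊗[k] Module.Dual k H →ₗ[k] Module.Dual k H ⊗[k] H :=
  (TensorProduct.comm k H (Module.Dual k H)).toLinearMap
    ∘ₗ (LinearMap.lTensor H (rightMulDual k H))
    ∘ₗ (TensorProduct.assoc k H H (Module.Dual k H)).toLinearMap
    ∘ₗ ((Coalgebra.comul (R := k) (A := H)).rTensor (Module.Dual k H))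

/-- The convolution-type multiplication on `H*`: `(l * l')(x) = Σ l(x₍₂₎) l'(x₍₁₎)`. -/
noncomputable def convMul : Module.Dual k H ⊗[k] Module.Dual k H →ₗ[k] Module.Dual k H :=
  (LinearMap.llcomp k H (k ⊗[k] k) k (LinearMap.mul' k k))
    ∘ₗ (LinearMap.lcomp k (k ⊗[k] k) (Coalgebra.comul (R := k) (A := H)))
    ∘ₗ (TensorProduct.homTensorHomMap (σ₁₂ := RingHom.id k) (M := H) (N := H) (M₂ := k) (N₂ := k))
    ∘ₗ (TensorProduct.comm k (Module.Dual k H) (Module.Dual k H)).toLinearMap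

/-- The Heisenberg-double-type multiplication on `H* ⊗ H`:
`(l ⊗ h)(l' ⊗ h') = Σ (l * (x ↦ l'(x · h₍₂₎))) ⊗ h₍₁₎ h'`. -/
noncomputable def heisMul :
    (Module.Dual k H ⊗[k] H) ⊗[k] (Module.Dual k H ⊗[k] H)
      →ₗ[k] Module.Dual k H ⊗[k] H :=
  twistMul k (convMul k H) (LinearMap.mul' k H) (sigmaBi k H)

variable (M : Type*) [AddCommGroup M] [Module k M]

/-- From a right coaction `δ : M → M ⊗ H`, the contraction `M ⊗ H* → M`,
`m ⊗ l ↦ Σ l(m₍₁₎) m₍₀₎`. -/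
noncomputable def coactContract (δ : M →ₗ[k] M ⊗[k] H) :
    M ⊗[k] Module.Dual k H →ₗ[k] M :=
  (TensorProduct.rid k M).toLinearMap
    ∘ₗ (LinearMap.lTensor M (contractRight k H))
    ∘ₗ (TensorProduct.assoc k M H (Module.Dual k H)).toLinearMap
    ∘ₗ (δ.rTensor (Module.Dual k H))

/-- The Heisenberg action `M ⊗ (H* ⊗ H) → M`, `m ⊗ (l ⊗ h) ↦ Σ l(m₍₁₎) (m₍₀₎ · h)`,
associated to a right action `ρ` and a right coaction `δ`. -/
noncomputable def heisAction (ρ : M ⊗[k] H →ₗ[k] M) (δ : M →ₗ[k] M ⊗[k] H) :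
    M ⊗[k] (Module.Dual k H ⊗[k] H) →ₗ[k] M :=
  ρ ∘ₗ ((coactContract k H M δ).rTensor H)
    ∘ₗ (TensorProduct.assoc k M (Module.Dual k H) H).symm.toLinearMap


set_option maxHeartbeats 1000000 in
set_option synthInstance.maxHeartbeats 400000 in
lemma rightMulDual_apply' (a : H) (l : Module.Dual k H) (x : H) :
    rightMulDual k H (a ⊗ₜ[k] l) x = l (x * a) := by
  simp [rightMulDual]

set_option maxHeartbeats 1000000 in
set_option synthInstance.maxHeartbeats 400000 in
lemma convMul_eval (l lam : Module.Dual k H) (x : H) :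
    convMul k H (l ⊗ₜ[k] lam) x
      = (LinearMap.mul' k k) ((TensorProduct.map lam l) (Coalgebra.comul (R := k) x)) := by
  simp [convMul]

set_option maxHeartbeats 1000000 in
set_option synthInstance.maxHeartbeats 400000 in
lemma heisAction_eval (ρ : M ⊗[k] H →ₗ[k] M) (δ : M →ₗ[k] M ⊗[k] H)
    (n : M) (lam : Module.Dual k H) (y : H) :
    heisAction k H M ρ δ (n ⊗ₜ[k] (lam ⊗ₜ[k] y))
      = ρ (((TensorProduct.rid k M) ((LinearMap.lTensor M lam) (δ n))) ⊗ₜ[k] y) := by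
  simp only [heisAction, coactContract, LinearMap.coe_comp, LinearEquiv.coe_coe,
    Function.comp_apply, assoc_symm_tmul, LinearMap.rTensor_tmul]
  have key : ∀ u : M ⊗[k] H,
      (TensorProduct.rid k M) ((LinearMap.lTensor M (contractRight k H))
        ((TensorProduct.assoc k M H (Module.Dual k H)) (u ⊗ₜ[k] lam)))
      = (TensorProduct.rid k M) ((LinearMap.lTensor M lam) u) := by
    intro u
    induction u using TensorProduct.induction_on with
    | zero => simp
    | tmul x a => simp [contractRight_apply]
    | add u v hu hv =>
        simp only [add_tmul, map_add, hu, hv]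
  rw [key (δ n)]

set_option maxHeartbeats 4000000 in
set_option synthInstance.maxHeartbeats 400000 in
/-- A right-right Hopf module `(M, ρ, δ)` over a bialgebra `H` becomes a unital associative
right module over the Heisenberg-double-type algebra `H* ⊗_{σ_bi} H` via
`m ⊗ (l ⊗ h) ↦ Σ l(m₍₁₎)(m₍₀₎ · h)`. -/
theorem hopf_module_is_heisenberg_module
    (ρ : M ⊗[k] H →ₗ[k] M) (δ : M →ₗ[k] M ⊗[k] H)
    (hρ1 : ∀ m : M, ρ (m ⊗ₜ[k] (1 : H)) = m)
    (hρassoc : ρ ∘ₗ (ρ.rTensor H) ∘ₗ (TensorProduct.assoc k M H H).symm.toLinearMap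
      = ρ ∘ₗ ((LinearMap.mul' k H).lTensor M))
    (hδcounit : (TensorProduct.rid k M).toLinearMap
        ∘ₗ (LinearMap.lTensor M (Coalgebra.counit (R := k) (A := H))) ∘ₗ δ
      = LinearMap.id)
    (hδcoassoc : (TensorProduct.assoc k M H H).toLinearMap ∘ₗ (δ.rTensor H) ∘ₗ δ
      = ((Coalgebra.comul (R := k) (A := H)).lTensor M) ∘ₗ δ)
    (hhopf : δ ∘ₗ ρ
      = (TensorProduct.map ρ (LinearMap.mul' k H))
        ∘ₗ (TensorProduct.tensorTensorTensorComm k M H H H).toLinearMap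
        ∘ₗ (TensorProduct.map δ (Coalgebra.comul (R := k) (A := H)))) :
    (∀ m : M,
        heisAction k H M ρ δ
          (m ⊗ₜ[k] ((Coalgebra.counit (R := k) (A := H)) ⊗ₜ[k] (1 : H))) = m)
    ∧ heisAction k H M ρ δ
        ∘ₗ ((heisAction k H M ρ δ).rTensor (Module.Dual k H ⊗[k] H))
        ∘ₗ (TensorProduct.assoc k M (Module.Dual k H ⊗[k] H)
              (Module.Dual k H ⊗[k] H)).symm.toLinearMap
      = heisAction k H M ρ δ ∘ₗ ((heisMul k H).lTensor M) := by
  refine ⟨fun m => ?_, ?_⟩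
  · have hcu := LinearMap.congr_fun hδcounit m
    simp only [LinearMap.coe_comp, LinearEquiv.coe_coe, Function.comp_apply,
      LinearMap.id_apply] at hcu
    rw [heisAction_eval, hcu, hρ1]
  · apply TensorProduct.ext'
    intro m z
    induction z using TensorProduct.induction_on with
    | zero => simp
    | add x y hx hy => simp only [tmul_add, map_add, hx, hy]
    | tmul a b =>
      induction a using TensorProduct.induction_on with
      | zero => simp
      | add a1 a2 h1 h2 => simp only [add_tmul, tmul_add, map_add, h1, h2]
      | tmul l h =>
        induction b using TensorProduct.induction_on with
        | zero => simp
        | add b1 b2 h1 h2 => simp only [tmul_add, map_add, h1, h2]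
        | tmul l' h' =>
          simp only [LinearMap.coe_comp, LinearEquiv.coe_coe, Function.comp_apply,
            assoc_symm_tmul, LinearMap.rTensor_tmul, LinearMap.lTensor_tmul]
          -- set up representations
          obtain ⟨S, hS⟩ := TensorProduct.exists_finset (δ m)
          obtain ⟨T, hT⟩ := TensorProduct.exists_finset (Coalgebra.comul (R := k) h)
          choose U hU using fun p : M × H => TensorProduct.exists_finset (δ p.1)
          choose V hV using fun p : M × H =>
            TensorProduct.exists_finset (Coalgebra.comul (R := k) (A := H) p.2)
          -- action associativity, elementwise
          have hρa : ∀ (x : M) (a b : H),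
              ρ (ρ (x ⊗ₜ[k] a) ⊗ₜ[k] b) = ρ (x ⊗ₜ[k] (a * b)) := by
            intro x a b
            have h0 := LinearMap.congr_fun hρassoc (x ⊗ₜ[k] (a ⊗ₜ[k] b))
            simpa only [LinearMap.coe_comp, LinearEquiv.coe_coe, Function.comp_apply,
              assoc_symm_tmul, LinearMap.rTensor_tmul, LinearMap.lTensor_tmul,
              LinearMap.mul'_apply] using h0
          -- generic evaluation of the action at m
          have hactgen : ∀ (lam : Module.Dual k H) (y : H),
              heisAction k H M ρ δ (m ⊗ₜ[k] (lam ⊗ₜ[k] y))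
                = ∑ p ∈ S, lam p.2 • ρ (p.1 ⊗ₜ[k] y) := by
            intro lam y
            rw [heisAction_eval, hS]
            simp only [map_sum, LinearMap.lTensor_tmul, rid_tmul, sum_tmul,
              ← smul_tmul', map_smul]
          -- Hopf compatibility, elementwise
          have hδρ : ∀ p : M × H, δ (ρ (p.1 ⊗ₜ[k] h))
              = ∑ q ∈ T, ∑ r ∈ U p, ρ (r.1 ⊗ₜ[k] q.1) ⊗ₜ[k] (r.2 * q.2) := by
            intro p
            have hh := LinearMap.congr_fun hhopf (p.1 ⊗ₜ[k] h)
            simp only [LinearMap.coe_comp, LinearEquiv.coe_coe, Function.comp_apply,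
              map_tmul] at hh
            rw [hU p, hT] at hh
            simpa only [sum_tmul, tmul_sum, map_sum, tensorTensorTensorComm_tmul,
              map_tmul, LinearMap.mul'_apply] using hh
          -- second application of the action
          have hL2 : ∀ p : M × H,
              heisAction k H M ρ δ (ρ (p.1 ⊗ₜ[k] h) ⊗ₜ[k] (l' ⊗ₜ[k] h'))
                = ∑ q ∈ T, ∑ r ∈ U p, l' (r.2 * q.2) • ρ (r.1 ⊗ₜ[k] (q.1 * h')) := by
            intro p
            rw [heisAction_eval, hδρ p]
            simp only [map_sum, LinearMap.lTensor_tmul, rid_tmul, sum_tmul,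
              ← smul_tmul', map_smul, hρa]
          -- full left-hand side
          have hLHS : heisAction k H M ρ δ
                (heisAction k H M ρ δ (m ⊗ₜ[k] (l ⊗ₜ[k] h)) ⊗ₜ[k] (l' ⊗ₜ[k] h'))
              = ∑ p ∈ S, ∑ q ∈ T, ∑ r ∈ U p,
                  (l' (r.2 * q.2) * l p.2) • ρ (r.1 ⊗ₜ[k] (q.1 * h')) := by
            rw [hactgen l h, sum_tmul]
            simp only [← smul_tmul', map_sum, map_smul, hL2, Finset.smul_sum, smul_smul]
            refine Finset.sum_congr rfl fun p _ => Finset.sum_congr rfl fun q _ =>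
              Finset.sum_congr rfl fun r _ => by rw [mul_comm]
          -- evaluation of the Heisenberg product
          have hmul : heisMul k H ((l ⊗ₜ[k] h) ⊗ₜ[k] (l' ⊗ₜ[k] h'))
              = ∑ q ∈ T, (convMul k H (l ⊗ₜ[k] rightMulDual k H (q.2 ⊗ₜ[k] l')))
                  ⊗ₜ[k] (q.1 * h') := by
            simp only [heisMul, twistMul, sigmaBi, LinearMap.coe_comp, LinearEquiv.coe_coe,
              Function.comp_apply, assoc_tmul, assoc_symm_tmul, LinearMap.lTensor_tmul,
              LinearMap.rTensor_tmul, comm_tmul, LinearMap.mul'_apply]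
            rw [hT]
            simp only [sum_tmul, tmul_sum, map_sum, assoc_tmul, assoc_symm_tmul,
              LinearMap.lTensor_tmul, LinearMap.rTensor_tmul, comm_tmul,
              LinearMap.mul'_apply]
          -- evaluation of the convolution factor
          have hconv : ∀ (q : H × H) (p : M × H),
              convMul k H (l ⊗ₜ[k] rightMulDual k H (q.2 ⊗ₜ[k] l')) p.2
                = ∑ r ∈ V p, l' (r.1 * q.2) * l r.2 := by
            intro q p
            rw [convMul_eval, hV p]
            simp only [map_sum, map_tmul, LinearMap.mul'_apply, rightMulDual_apply']
          -- full right-hand side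
          have hRHS : heisAction k H M ρ δ
                (m ⊗ₜ[k] heisMul k H ((l ⊗ₜ[k] h) ⊗ₜ[k] (l' ⊗ₜ[k] h')))
              = ∑ q ∈ T, ∑ p ∈ S, ∑ r ∈ V p,
                  (l' (r.1 * q.2) * l r.2) • ρ (p.1 ⊗ₜ[k] (q.1 * h')) := by
            rw [hmul, tmul_sum, map_sum]
            simp only [hactgen, hconv, Finset.sum_smul]
          -- coassociativity, elementwise
          have key : (∑ p ∈ S, ∑ r ∈ U p, r.1 ⊗ₜ[k] (r.2 ⊗ₜ[k] p.2))
              = ∑ p ∈ S, ∑ r ∈ V p, p.1 ⊗ₜ[k] (r.1 ⊗ₜ[k] r.2) := by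
            have hco := LinearMap.congr_fun hδcoassoc m
            simp only [LinearMap.coe_comp, LinearEquiv.coe_coe, Function.comp_apply] at hco
            rw [hS] at hco
            simpa only [map_sum, LinearMap.rTensor_tmul, LinearMap.lTensor_tmul, hU, hV,
              sum_tmul, tmul_sum, assoc_tmul] using hco
          -- transport coassociativity through the relevant linear form
          have hkey2 : ∀ q : H × H,
              (∑ p ∈ S, ∑ r ∈ U p,
                  (l' (r.2 * q.2) * l p.2) • ρ (r.1 ⊗ₜ[k] (q.1 * h')))
                = ∑ p ∈ S, ∑ r ∈ V p,
                    (l' (r.1 * q.2) * l r.2) • ρ (p.1 ⊗ₜ[k] (q.1 * h')) := by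
            intro q
            have hk := congrArg
              (⇑(ρ ∘ₗ ((TensorProduct.mk k M H).flip (q.1 * h'))
                  ∘ₗ (TensorProduct.rid k M).toLinearMap
                  ∘ₗ (LinearMap.lTensor M ((LinearMap.mul' k k)
                        ∘ₗ (TensorProduct.map (l' ∘ₗ LinearMap.mulRight k q.2) l))))) key
            simpa only [map_sum, LinearMap.coe_comp, LinearEquiv.coe_coe,
              Function.comp_apply, LinearMap.lTensor_tmul, map_tmul,
              LinearMap.mul'_apply, LinearMap.mulRight_apply, rid_tmul, map_smul,
              TensorProduct.mk_apply, LinearMap.flip_apply] using hk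
          rw [hLHS, hRHS]
          calc (∑ p ∈ S, ∑ q ∈ T, ∑ r ∈ U p,
                  (l' (r.2 * q.2) * l p.2) • ρ (r.1 ⊗ₜ[k] (q.1 * h')))
              = ∑ q ∈ T, ∑ p ∈ S, ∑ r ∈ U p,
                  (l' (r.2 * q.2) * l p.2) • ρ (r.1 ⊗ₜ[k] (q.1 * h')) :=
                Finset.sum_comm
            _ = ∑ q ∈ T, ∑ p ∈ S, ∑ r ∈ V p,
                  (l' (r.1 * q.2) * l r.2) • ρ (p.1 ⊗ₜ[k] (q.1 * h')) :=
                Finset.sum_congr rfl fun q _ => hkey2 q
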